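/- arXiv:1510.04843 — 2 statements merged into one kernel-verified Lean document; each statement's English description precedes it below -/
import Mathlib

section
/- Let G be a graph and T a tree, both on n vertices. If 3·Δ(G) + ℓ(T) - 2 < n, then G and T pack. -/
open SimpleGraph
open scoped Classical

/-- Degree of a vertex. -/
noncomputable def deg {V : Type} (G : SimpleGraph V) (v : V) : ℕ := Nat.card (G.neighborSet v)

/-- Number of vertices of degree exactly 1 (leaves for trees/forests). -/
noncomputable def numLeaves {V : Type} (G : SimpleGraph V) : ℕ := Nat.card {v : V // deg G v = 1}

/-- Number of connected components containing at least one edge. -/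
noncomputable def numEdgeComps {V : Type} (G : SimpleGraph V) : ℕ :=
  Nat.card {c : G.ConnectedComponent // ∃ v w : V, G.Adj v w ∧ G.connectedComponentMk v = c}

/-- Maximum degree. -/
noncomputable def maxDeg {V : Type} (G : SimpleGraph V) : ℕ := sSup (Set.range (deg G))

/-- `G` and `H` pack: a bijection sends edges of `H` to non-edges of `G`. -/
def Packs {V W : Type} (G : SimpleGraph V) (H : SimpleGraph W) : Prop :=
  ∃ f : W ≃ V, ∀ x y : W, H.Adj x y → ¬ G.Adj (f x) (f y)

/-- `G` contains a copy of `H` as a subgraph. -/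
def ContainsCopy {V W : Type} (G : SimpleGraph V) (H : SimpleGraph W) : Prop :=
  ∃ f : W ↪ V, ∀ x y : W, H.Adj x y → G.Adj (f x) (f y)

/-- `G` realizes the degree sequence `π`. -/
def IsRealization {n : ℕ} (G : SimpleGraph (Fin n)) (π : Fin n → ℕ) : Prop :=
  ∀ i, deg G i = π i

/-- `π` is a graphic sequence. -/
def Graphic {n : ℕ} (π : Fin n → ℕ) : Prop :=
  ∃ G : SimpleGraph (Fin n), IsRealization G π

/-- `π` is potentially `H`-graphic. -/
def PotentiallyGraphic {n : ℕ} {W : Type} (π : Fin n → ℕ) (H : SimpleGraph W) : Prop :=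
  ∃ G : SimpleGraph (Fin n), IsRealization G π ∧ ContainsCopy G H

/-- The complementary sequence `π̄ = (n-1-d_n, …, n-1-d_1)`. -/
def compSeq {n : ℕ} (π : Fin n → ℕ) : Fin n → ℕ := fun i => n - 1 - π i.rev

/-- The potential-Ramsey number. -/
noncomputable def rpot {W₁ W₂ : Type} (H₁ : SimpleGraph W₁) (H₂ : SimpleGraph W₂) : ℕ :=
  sInf {N : ℕ | ∀ π : Fin N → ℕ, Antitone π → Graphic π →
    PotentiallyGraphic π H₁ ∨ PotentiallyGraphic (compSeq π) H₂}

/-- The star `K_{1,t-1}` on `t` vertices, centered at vertex `0`. -/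
def starGraph (t : ℕ) : SimpleGraph (Fin t) := SimpleGraph.fromRel (fun i _ => (i : ℕ) = 0)

section TreePackingAux
set_option linter.unusedSectionVars false
variable {V : Type} [Fintype V]

lemma deg_eq_degree (G : SimpleGraph V) (v : V) : deg G v = G.degree v := by
  rw [deg, Nat.card_eq_fintype_card, degree, neighborFinset, Set.toFinset_card]

lemma deg_le_maxDeg (G : SimpleGraph V) (v : V) : deg G v ≤ maxDeg G :=
  le_csSup ((Set.finite_range _).bddAbove) (Set.mem_range_self v)

lemma numLeaves_eq (G : SimpleGraph V) :
    numLeaves G = (Finset.univ.filter (fun v => deg G v = 1)).card := by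
  simp [numLeaves, Nat.card_eq_fintype_card, Fintype.card_subtype]

section Tree
variable {T : SimpleGraph V}

lemma exists_shortest_path (hc : T.Connected) (r v : V) :
    ∃ p : T.Walk r v, p.IsPath ∧ p.length = T.dist r v := by
  obtain ⟨w, hw⟩ := (hc r v).exists_walk_length_eq_dist
  exact ⟨w.bypass, w.bypass_isPath,
    le_antisymm (hw ▸ w.length_bypass_le) (dist_le _)⟩

lemma adj_dist_succ (hc : T.Connected) {u x : V} (r : V) (h : T.Adj u x) :
    T.dist r x ≤ T.dist r u + 1 := by
  obtain ⟨w, -, hl⟩ := exists_shortest_path hc r u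
  have := dist_le (w.concat h)
  rwa [Walk.length_concat, hl] at this

lemma exists_parent (hc : T.Connected) {r x : V} (hx : x ≠ r) :
    ∃ p, T.Adj p x ∧ T.dist r p + 1 = T.dist r x := by
  obtain ⟨w, hw⟩ := (hc x r).exists_walk_length_eq_dist
  cases w with
  | nil => exact absurd rfl hx
  | @cons _ b _ h q =>
    refine ⟨b, h.symm, ?_⟩
    have h1 : T.dist r b ≤ q.length := SimpleGraph.dist_comm (G := T) ▸ dist_le q
    have h2 : T.dist r x ≤ T.dist r b + 1 := adj_dist_succ hc r h.symm
    have h3 : q.length + 1 = T.dist r x := by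
      simpa [Walk.length_cons, SimpleGraph.dist_comm (G := T) (u := x) (v := r)] using hw
    omega

lemma concat_isPath {u v x : V} {w : T.Walk u v} (hw : w.IsPath) (h : T.Adj v x)
    (hx : x ∉ w.support) : (w.concat h).IsPath := by
  rw [Walk.isPath_def, Walk.support_concat]
  simp only [List.concat_eq_append, List.nodup_append, List.nodup_cons, List.not_mem_nil,
    not_false_iff, List.nodup_nil, and_true, true_and]
  constructor
  · exact hw.support_nodup
  · intro a ha b hb hab
    rw [List.mem_singleton] at hb
    exact hx (hb ▸ hab ▸ ha)

lemma parent_unique (hT : T.IsTree) {r x p₁ p₂ : V}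
    (h₁ : T.Adj p₁ x) (h₂ : T.Adj p₂ x)
    (d₁ : T.dist r p₁ + 1 = T.dist r x) (d₂ : T.dist r p₂ + 1 = T.dist r x) : p₁ = p₂ := by
  obtain ⟨w₁, hw₁, hl₁⟩ := exists_shortest_path hT.isConnected r p₁
  obtain ⟨w₂, hw₂, hl₂⟩ := exists_shortest_path hT.isConnected r p₂
  have hx₁ : x ∉ w₁.support := by
    intro hmem
    have h5 := Walk.length_takeUntil_le w₁ hmem
    have h6 : T.dist r x ≤ (w₁.takeUntil x hmem).length := dist_le _
    omega
  have hx₂ : x ∉ w₂.support := by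
    intro hmem
    have h5 := Walk.length_takeUntil_le w₂ hmem
    have h6 : T.dist r x ≤ (w₂.takeUntil x hmem).length := dist_le _
    omega
  have hp₁ : (w₁.concat h₁).IsPath := concat_isPath hw₁ h₁ hx₁
  have hp₂ : (w₂.concat h₂).IsPath := concat_isPath hw₂ h₂ hx₂
  have huniq := isAcyclic_iff_path_unique.mp hT.IsAcyclic
    (⟨w₁.concat h₁, hp₁⟩ : T.Path r x) ⟨w₂.concat h₂, hp₂⟩
  have heq : w₁.concat h₁ = w₂.concat h₂ := congrArg Subtype.val huniq
  obtain ⟨hv, -⟩ := Walk.concat_inj heq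
  exact hv

lemma adj_dist_ne (hT : T.IsTree) {r u x : V} (h : T.Adj u x) :
    T.dist r u ≠ T.dist r x := by
  intro hd
  obtain ⟨P, hP, hPl⟩ := exists_shortest_path hT.isConnected r x
  obtain ⟨Q, hQ, hQl⟩ := exists_shortest_path hT.isConnected r u
  have hxQ : x ∉ Q.support := by
    intro hmem
    have hspec := Q.take_spec hmem
    have hlen : (Q.takeUntil x hmem).length + (Q.dropUntil x hmem).length = Q.length := by
      rw [← Walk.length_append, hspec]
    have hdrop : (Q.dropUntil x hmem).length ≠ 0 := by
      intro h0
      exact h.ne' (Walk.eq_of_length_eq_zero h0)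
    have h6 : T.dist r x ≤ (Q.takeUntil x hmem).length := dist_le _
    omega
  have hW : (Q.concat h).IsPath := concat_isPath hQ h hxQ
  have huniq := isAcyclic_iff_path_unique.mp hT.IsAcyclic
    (⟨Q.concat h, hW⟩ : T.Path r x) ⟨P, hP⟩
  have heq : (Q.concat h).length = P.length := congrArg (fun (q : T.Path r x) => q.1.length) huniq
  rw [Walk.length_concat] at heq
  omega


lemma one_le_deg (hc : T.Connected) (hn : 2 ≤ Fintype.card V) (v : V) : 1 ≤ deg T v := by
  rw [deg_eq_degree]
  obtain ⟨w, hw⟩ := Fintype.exists_ne_of_one_lt_card (by omega) v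
  obtain ⟨p⟩ := hc.preconnected v w
  cases p with
  | nil => exact absurd rfl hw.symm
  | cons h q =>
    rw [Nat.one_le_iff_ne_zero, ← Nat.pos_iff_ne_zero]
    exact (T.degree_pos_iff_exists_adj v).mpr ⟨_, h⟩

lemma sum_deg_branch (hT : T.IsTree) (hn : 2 ≤ Fintype.card V) :
    ∑ v ∈ Finset.univ.filter (fun v => 3 ≤ deg T v), ((deg T v : ℤ) - 2)
      = (numLeaves T : ℤ) - 2 := by
  have hhs : (∑ v, (deg T v : ℤ)) = 2 * ((Fintype.card V : ℤ) - 1) := by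
    have h1 : ∑ v, T.degree v = 2 * T.edgeFinset.card := T.sum_degrees_eq_twice_card_edges
    have h2 : T.edgeFinset.card + 1 = Fintype.card V := hT.card_edgeFinset
    have : (∑ v, (deg T v : ℤ)) = ((∑ v, T.degree v : ℕ) : ℤ) := by
      rw [Nat.cast_sum]
      exact Finset.sum_congr rfl (fun v _ => by rw [deg_eq_degree])
    rw [this, h1]
    push_cast [← h2]
    ring
  have htot : ∑ v, ((deg T v : ℤ) - 2) = -2 := by
    rw [Finset.sum_sub_distrib, hhs]
    simp [Finset.card_univ]
    ring
  have hsplit := Finset.sum_filter_add_sum_filter_not Finset.univ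
    (fun v => 3 ≤ deg T v) (fun v => (deg T v : ℤ) - 2)
  have hsmall : ∑ v ∈ Finset.univ.filter (fun v => ¬ 3 ≤ deg T v), ((deg T v : ℤ) - 2)
      = -(numLeaves T : ℤ) := by
    have hcongr : ∀ v ∈ Finset.univ.filter (fun v => ¬ 3 ≤ deg T v),
        (deg T v : ℤ) - 2 = if deg T v = 1 then (-1 : ℤ) else 0 := by
      intro v hv
      rw [Finset.mem_filter] at hv
      have h1 := one_le_deg hT.isConnected hn v
      have h2 := hv.2
      interval_cases h : deg T v <;> simp
    rw [Finset.sum_congr rfl hcongr, Finset.sum_ite, Finset.sum_const, Finset.sum_const_zero,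
      Finset.filter_filter, numLeaves_eq]
    have : Finset.univ.filter (fun v => ¬ 3 ≤ deg T v ∧ deg T v = 1)
        = Finset.univ.filter (fun v => deg T v = 1) := by
      apply Finset.filter_congr
      intro v _
      constructor
      · exact fun hh => hh.2
      · exact fun hh => ⟨by omega, hh⟩
    rw [this]
    simp
  omega

lemma sum_deg_le (hT : T.IsTree) (hn : 2 ≤ Fintype.card V) (B : Finset V) :
    (∑ b ∈ B, (deg T b : ℤ)) ≤ 2 * B.card + ((numLeaves T : ℤ) - 2) := by
  have key : (∑ b ∈ B, ((deg T b : ℤ) - 2)) ≤ (numLeaves T : ℤ) - 2 := by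
    rw [← Finset.sum_filter_add_sum_filter_not B (fun v => 3 ≤ deg T v)]
    have h1 : ∑ v ∈ B.filter (fun v => ¬ 3 ≤ deg T v), ((deg T v : ℤ) - 2) ≤ 0 := by
      apply Finset.sum_nonpos
      intro v hv
      rw [Finset.mem_filter] at hv
      have := hv.2
      omega
    have h2 : ∑ v ∈ B.filter (fun v => 3 ≤ deg T v), ((deg T v : ℤ) - 2)
        ≤ ∑ v ∈ Finset.univ.filter (fun v => 3 ≤ deg T v), ((deg T v : ℤ) - 2) := by
      apply Finset.sum_le_sum_of_subset_of_nonneg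
      · exact Finset.filter_subset_filter _ (Finset.subset_univ B)
      · intro v hv _
        rw [Finset.mem_filter] at hv
        have := hv.2
        omega
    rw [← sum_deg_branch hT hn]
    omega
  have : (∑ b ∈ B, (deg T b : ℤ)) = (∑ b ∈ B, ((deg T b : ℤ) - 2)) + 2 * B.card := by
    rw [Finset.sum_sub_distrib, Finset.sum_const]
    ring
  omega


lemma build (G : SimpleGraph V) {T : SimpleGraph V} (hT : T.IsTree) {n : ℕ}
    (hV : Fintype.card V = n)
    (h : 3 * (maxDeg G : ℤ) + numLeaves T ≤ (n : ℤ) + 1) (r : V) :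
    ∀ k : ℕ, k ≤ n → ∃ (S : Finset V) (f : V → V), S.card = k ∧ (1 ≤ k → r ∈ S) ∧
      (∀ u v, u ∈ S → v ∉ S → T.dist r u ≤ T.dist r v) ∧
      Set.InjOn f S ∧
      (∀ u v, u ∈ S → v ∈ S → T.Adj u v → ¬ G.Adj (f u) (f v)) := by
  intro k
  induction k with
  | zero => exact fun _ => ⟨∅, id, by simp, by simp, by simp, by simp, by simp⟩
  | succ k ih =>
    intro hk1
    obtain ⟨S, f, hcard, hr, hR, hinj, hgood⟩ := ih (by omega)
    by_cases hk0 : k = 0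
    · subst hk0
      refine ⟨{r}, id, by simp, fun _ => by simp, ?_, ?_, ?_⟩
      · intro u v hu hv
        rw [Finset.mem_singleton] at hu
        subst hu
        simp [SimpleGraph.dist_self]
      · simp
      · intro u v hu hv hadj
        rw [Finset.mem_singleton] at hu hv
        subst hu; subst hv
        exact absurd hadj (T.loopless.irrefl v)
    · have hrS : r ∈ S := hr (by omega)
      have hSne : (Finset.univ \ S).Nonempty := by
        rw [← Finset.card_pos, Finset.card_sdiff_of_subset (Finset.subset_univ S), Finset.card_univ, hV,
          hcard]
        omega
      obtain ⟨x, hxmem, hxmin0⟩ :=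
        Finset.exists_min_image (Finset.univ \ S) (fun y => T.dist r y) hSne
      have hxS : x ∉ S := (Finset.mem_sdiff.mp hxmem).2
      have hxmin : ∀ y, y ∉ S → T.dist r x ≤ T.dist r y := fun y hy =>
        hxmin0 y (Finset.mem_sdiff.mpr ⟨Finset.mem_univ y, hy⟩)
      have hxr : x ≠ r := fun hh => hxS (hh ▸ hrS)
      obtain ⟨p, hpx, hpd⟩ := exists_parent hT.isConnected hxr
      have hpS : p ∈ S := by
        by_contra hpS
        have := hxmin p hpS
        omega
      have hNx : ∀ u ∈ S, T.Adj u x → u = p := by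
        intro u huS hadj
        have h1 : T.dist r u ≤ T.dist r x := hR u x huS hxS
        have h2 : T.dist r u ≠ T.dist r x := adj_dist_ne hT hadj
        have h3 : T.dist r x ≤ T.dist r u + 1 := adj_dist_succ hT.isConnected r hadj
        exact parent_unique hT hadj hpx (by omega) hpd
      have hcard' : (insert x S).card = k + 1 := by
        rw [Finset.card_insert_of_notMem hxS, hcard]
      have hR' : ∀ u v, u ∈ insert x S → v ∉ insert x S → T.dist r u ≤ T.dist r v := by
        intro u v hu hv
        have hvS : v ∉ S := fun hh => hv (Finset.mem_insert_of_mem hh)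
        rcases Finset.mem_insert.mp hu with rfl | huS
        · exact hxmin v hvS
        · exact hR u v huS hvS
      set FS := S.image f with hFS
      have hFScard : FS.card = k := by rw [hFS, Finset.card_image_of_injOn hinj, hcard]
      have hmemFS : ∀ u ∈ S, f u ∈ FS := fun u hu => Finset.mem_image_of_mem f hu
      by_cases hext : ∃ a, a ∉ FS ∧ ¬ G.Adj a (f p)
      · obtain ⟨a, haFS, hana⟩ := hext
        have hfa : ∀ u ∈ S, f u ≠ a := fun u hu hh => haFS (hh ▸ hmemFS u hu)
        refine ⟨insert x S, Function.update f x a, hcard',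
          fun _ => Finset.mem_insert_of_mem hrS, hR', ?_, ?_⟩
        · intro u hu v hv huv
          simp only [Finset.coe_insert, Set.mem_insert_iff, Finset.mem_coe] at hu hv
          have hne : ∀ z ∈ S, z ≠ x := fun z hz hh => hxS (hh ▸ hz)
          rcases hu with rfl | huS <;> rcases hv with rfl | hvS
          · rfl
          · rw [Function.update_self, Function.update_of_ne (hne v hvS)] at huv
            exact absurd huv.symm (hfa v hvS)
          · rw [Function.update_self, Function.update_of_ne (hne u huS)] at huv
            exact absurd huv (hfa u huS)
          · rw [Function.update_of_ne (hne u huS), Function.update_of_ne (hne v hvS)] at huv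
            exact hinj huS hvS huv
        · intro u v hu hv hadj
          have hne : ∀ z ∈ S, z ≠ x := fun z hz hh => hxS (hh ▸ hz)
          rcases Finset.mem_insert.mp hu with rfl | huS <;>
            rcases Finset.mem_insert.mp hv with rfl | hvS
          · exact absurd hadj (T.loopless.irrefl _)
          · have hvp : v = p := hNx v hvS hadj.symm
            subst hvp
            rw [Function.update_self, Function.update_of_ne (hne v hvS)]
            exact hana
          · have hup : u = p := hNx u huS hadj
            subst hup
            rw [Function.update_self, Function.update_of_ne (hne u huS)]
            exact fun hc => hana hc.symm
          · rw [Function.update_of_ne (hne u huS), Function.update_of_ne (hne v hvS)]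
            exact hgood u v huS hvS hadj
      · push_neg at hext
        have hn2 : 2 ≤ Fintype.card V := by omega
        have hkn : k + 1 ≤ n := hk1
        have hFSne : (Finset.univ \ FS).Nonempty := by
          rw [← Finset.card_pos, Finset.card_sdiff_of_subset (Finset.subset_univ FS), Finset.card_univ, hV,
            hFScard]
          omega
        obtain ⟨a₀, ha₀mem⟩ := hFSne
        have ha₀FS : a₀ ∉ FS := (Finset.mem_sdiff.mp ha₀mem).2
        set B' := S.filter (fun b => G.Adj a₀ (f b)) with hB'
        set BadA := S.filter (fun w => G.Adj (f p) (f w)) with hBadA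
        set BadB := B'.biUnion (fun b => T.neighborFinset b) with hBadB
        have hB'card : B'.card ≤ maxDeg G := by
          have hsub : B'.image f ⊆ G.neighborFinset a₀ := by
            intro y hy
            obtain ⟨b, hb, rfl⟩ := Finset.mem_image.mp hy
            exact (G.mem_neighborFinset a₀ (f b)).mpr (Finset.mem_filter.mp hb).2
          calc B'.card = (B'.image f).card :=
                (Finset.card_image_of_injOn
                  (hinj.mono (Finset.coe_subset.mpr (Finset.filter_subset _ _)))).symm
            _ ≤ (G.neighborFinset a₀).card := Finset.card_le_card hsub
            _ = G.degree a₀ := G.card_neighborFinset_eq_degree a₀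
            _ ≤ maxDeg G := by rw [← deg_eq_degree]; exact deg_le_maxDeg G a₀
        have hBadAcard : BadA.card + (Finset.univ \ FS).card ≤ maxDeg G := by
          have h1 : BadA.image f ⊆ G.neighborFinset (f p) := by
            intro y hy
            obtain ⟨b, hb, rfl⟩ := Finset.mem_image.mp hy
            exact (G.mem_neighborFinset (f p) (f b)).mpr (Finset.mem_filter.mp hb).2
          have h2 : Finset.univ \ FS ⊆ G.neighborFinset (f p) := by
            intro a ha
            exact (G.mem_neighborFinset (f p) a).mpr
              (hext a (Finset.mem_sdiff.mp ha).2).symm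
          have h3 : Disjoint (BadA.image f) (Finset.univ \ FS) := by
            rw [Finset.disjoint_right]
            intro a ha hb
            obtain ⟨b, hb', rfl⟩ := Finset.mem_image.mp hb
            exact (Finset.mem_sdiff.mp ha).2 (hmemFS b (Finset.mem_filter.mp hb').1)
          calc BadA.card + (Finset.univ \ FS).card
              = (BadA.image f).card + (Finset.univ \ FS).card := by
                rw [Finset.card_image_of_injOn
                  (hinj.mono (Finset.coe_subset.mpr (Finset.filter_subset _ _)))]
            _ = (BadA.image f ∪ (Finset.univ \ FS)).card :=
                (Finset.card_union_of_disjoint h3).symm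
            _ ≤ (G.neighborFinset (f p)).card :=
                Finset.card_le_card (Finset.union_subset h1 h2)
            _ = G.degree (f p) := G.card_neighborFinset_eq_degree (f p)
            _ ≤ maxDeg G := by rw [← deg_eq_degree]; exact deg_le_maxDeg G (f p)
        have hAcard : (Finset.univ \ FS).card = n - k := by
          rw [Finset.card_sdiff_of_subset (Finset.subset_univ FS), Finset.card_univ, hV, hFScard]
        have ha₀p : G.Adj a₀ (f p) := hext a₀ ha₀FS
        have hxBadB : x ∈ BadB := by
          refine Finset.mem_biUnion.mpr ⟨p, Finset.mem_filter.mpr ⟨hpS, ha₀p⟩, ?_⟩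
          exact (T.mem_neighborFinset p x).mpr hpx
        have hBadBcard : (BadB.card : ℤ) ≤ 2 * (maxDeg G : ℤ) + ((numLeaves T : ℤ) - 2) := by
          have hc1 : BadB.card ≤ ∑ b ∈ B', (T.neighborFinset b).card := Finset.card_biUnion_le
          have hc2 : (∑ b ∈ B', ((T.neighborFinset b).card : ℤ))
              = ∑ b ∈ B', (deg T b : ℤ) := by
            refine Finset.sum_congr rfl (fun b _ => ?_)
            rw [T.card_neighborFinset_eq_degree b, ← deg_eq_degree]
          have hc3 := sum_deg_le hT hn2 B'
          have hc4 : (B'.card : ℤ) ≤ (maxDeg G : ℤ) := by exact_mod_cast hB'card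
          have hc1' : (BadB.card : ℤ) ≤ ∑ b ∈ B', ((T.neighborFinset b).card : ℤ) := by
            exact_mod_cast hc1
          linarith
        have hwex : ∃ w ∈ S, w ≠ p ∧ w ∉ BadA ∧ w ∉ BadB := by
          by_contra hcon
          push_neg at hcon
          have hsub : S ⊆ insert p (BadA ∪ BadB.erase x) := by
            intro w hw
            by_cases hwp : w = p
            · exact Finset.mem_insert.mpr (Or.inl hwp)
            · rcases Classical.em (w ∈ BadA) with hA' | hA'
              · exact Finset.mem_insert_of_mem (Finset.mem_union_left _ hA')
              · have hB'' := hcon w hw hwp hA'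
                exact Finset.mem_insert_of_mem (Finset.mem_union_right _
                  (Finset.mem_erase.mpr ⟨fun hh => hxS (hh ▸ hw), hB''⟩))
          have hc1 := Finset.card_le_card hsub
          have hc2 := Finset.card_insert_le p (BadA ∪ BadB.erase x)
          have hc3 := Finset.card_union_le BadA (BadB.erase x)
          have hc4 : (BadB.erase x).card + 1 = BadB.card := by
            rw [Finset.card_erase_of_mem hxBadB]
            have : 1 ≤ BadB.card := Finset.card_pos.mpr ⟨x, hxBadB⟩
            omega
          have hΔ : (BadA.card : ℤ) + ((n : ℤ) - k) ≤ (maxDeg G : ℤ) := by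
            have h5 := hBadAcard
            rw [hAcard] at h5
            have h6 : k ≤ n := by omega
            have h7 := (Nat.cast_le (α := ℤ)).mpr h5
            push_cast [Nat.cast_sub h6] at h7
            linarith
          have hfin : (k : ℤ) ≤ (BadA.card : ℤ) + ((BadB.card : ℤ) - 1) := by
            rw [← hcard]
            push_cast
            omega
          linarith
        obtain ⟨w, hwS, hwp, hwA, hwB⟩ := hwex
        have hwA' : ¬ G.Adj (f p) (f w) := fun hh => hwA (Finset.mem_filter.mpr ⟨hwS, hh⟩)
        have hwB' : ∀ b ∈ S, T.Adj w b → ¬ G.Adj a₀ (f b) := by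
          intro b hb hadj hGadj
          exact hwB (Finset.mem_biUnion.mpr ⟨b, Finset.mem_filter.mpr ⟨hb, hGadj⟩,
            (T.mem_neighborFinset b w).mpr hadj.symm⟩)
        have hwx : w ≠ x := fun hh => hxS (hh ▸ hwS)
        set f' := Function.update (Function.update f w a₀) x (f w) with hf'
        have hfx : f' x = f w := by rw [hf']; exact Function.update_self _ _ _
        have hfw : f' w = a₀ := by
          rw [hf', Function.update_of_ne hwx, Function.update_self]
        have hfother : ∀ u, u ≠ x → u ≠ w → f' u = f u := by
          intro u hux huw
          rw [hf', Function.update_of_ne hux, Function.update_of_ne huw]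
        have hfa₀ : ∀ u ∈ S, f u ≠ a₀ := fun u hu hh => ha₀FS (hh ▸ hmemFS u hu)
        refine ⟨insert x S, f', hcard', fun _ => Finset.mem_insert_of_mem hrS, hR', ?_, ?_⟩
        · intro u hu v hv huv
          simp only [Finset.coe_insert, Set.mem_insert_iff, Finset.mem_coe] at hu hv
          have hne : ∀ z ∈ S, z ≠ x := fun z hz hh => hxS (hh ▸ hz)
          rcases hu with rfl | huS <;> rcases hv with rfl | hvS
          · rfl
          · rw [hfx] at huv
            by_cases hvw : v = w
            · subst hvw
              rw [hfw] at huv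
              exact absurd huv (hfa₀ v hvS)
            · rw [hfother v (hne v hvS) hvw] at huv
              exact absurd (hinj hwS hvS huv).symm hvw
          · rw [hfx] at huv
            by_cases huw : u = w
            · subst huw
              rw [hfw] at huv
              exact absurd huv.symm (hfa₀ u huS)
            · rw [hfother u (hne u huS) huw] at huv
              exact absurd (hinj huS hwS huv) huw
          · by_cases huw : u = w <;> by_cases hvw : v = w
            · exact huw.trans hvw.symm
            · subst huw
              rw [hfw, hfother v (hne v hvS) hvw] at huv
              exact absurd huv.symm (hfa₀ v hvS)
            · subst hvw
              rw [hfw, hfother u (hne u huS) huw] at huv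
              exact absurd huv (hfa₀ u huS)
            · rw [hfother u (hne u huS) huw, hfother v (hne v hvS) hvw] at huv
              exact hinj huS hvS huv
        · intro u v hu hv hadj
          have hne : ∀ z ∈ S, z ≠ x := fun z hz hh => hxS (hh ▸ hz)
          rcases Finset.mem_insert.mp hu with rfl | huS <;>
            rcases Finset.mem_insert.mp hv with rfl | hvS
          · exact absurd hadj (T.loopless.irrefl _)
          · have hvp : v = p := hNx v hvS hadj.symm
            subst hvp
            rw [hfx, hfother v (hne v hvS) (Ne.symm hwp)]
            exact fun hh => hwA' hh.symm
          · have hup : u = p := hNx u huS hadj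
            subst hup
            rw [hfx, hfother u (hne u huS) (Ne.symm hwp)]
            exact hwA'
          · by_cases huw : u = w <;> by_cases hvw : v = w
            · subst huw; subst hvw
              exact absurd hadj (T.loopless.irrefl _)
            · subst huw
              rw [hfw, hfother v (hne v hvS) hvw]
              exact hwB' v hvS hadj
            · subst hvw
              rw [hfw, hfother u (hne u huS) huw]
              exact fun hh => hwB' u huS hadj.symm hh.symm
            · rw [hfother u (hne u huS) huw, hfother v (hne v hvS) hvw]
              exact hgood u v huS hvS hadj

end Tree


end TreePackingAux


/-- If T is a tree and G a graph on n vertices with 3Δ(G) + ℓ(T) - 2 < n,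
then G and T pack. -/
theorem tree_packing {V : Type} [Fintype V] {n : ℕ} (hV : Fintype.card V = n)
    (G T : SimpleGraph V) (hT : T.IsTree)
    (h : 3 * (maxDeg G : ℤ) + numLeaves T - 2 < n) :
    Packs G T := by
  obtain ⟨r⟩ := hT.isConnected.nonempty
  have h' : 3 * (maxDeg G : ℤ) + numLeaves T ≤ (n : ℤ) + 1 := by linarith
  obtain ⟨S, f, hcard, -, -, hinj, hgood⟩ := build G hT hV h' r n le_rfl
  have hSuniv : S = Finset.univ := Finset.eq_univ_of_card S (by rw [hcard, hV])
  have hinj' : Function.Injective f := fun a b hab =>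
    hinj (by simp [hSuniv]) (by simp [hSuniv]) hab
  have hbij : Function.Bijective f := Finite.injective_iff_bijective.mp hinj'
  refine ⟨Equiv.ofBijective f hbij, ?_⟩
  intro x y hxy
  simpa using hgood x y (by simp [hSuniv]) (by simp [hSuniv]) hxy
end

section
/- If a graphic sequence π is potentially H-graphic, then π has a realization G containing a copy of H on the |V(H)| vertices of largest degree in G. -/
open SimpleGraph
open scoped Classical

set_option maxHeartbeats 1600000
set_option linter.unusedSectionVars false

section Swap
variable {V : Type} [Fintype V] [DecidableEq V]

lemma deg_eq_card (G : SimpleGraph V) (w : V) :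
    deg G w = (G.neighborFinset w).card := by
  simp [deg, Nat.card_eq_fintype_card, SimpleGraph.neighborFinset, Set.toFinset_card]

def flipG (G : SimpleGraph V) (u v : V) (T : Finset V) : SimpleGraph V where
  Adj p q := if ((p = u ∨ p = v) ∧ q ∈ T) ∨ ((q = u ∨ q = v) ∧ p ∈ T) then
      (¬ G.Adj p q ∧ p ≠ q) else G.Adj p q
  symm := by
    refine ⟨fun p q h => ?_⟩
    by_cases hc : ((p = u ∨ p = v) ∧ q ∈ T) ∨ ((q = u ∨ q = v) ∧ p ∈ T)
    · rw [if_pos hc] at h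
      rw [if_pos (by tauto)]
      exact ⟨fun h' => h.1 h'.symm, fun e => h.2 e.symm⟩
    · rw [if_neg hc] at h
      rw [if_neg (by tauto)]
      exact h.symm
  loopless := by
    refine ⟨fun p h => ?_⟩
    by_cases hc : ((p = u ∨ p = v) ∧ p ∈ T) ∨ ((p = u ∨ p = v) ∧ p ∈ T)
    · rw [if_pos hc] at h; exact h.2 rfl
    · rw [if_neg hc] at h; exact G.loopless.irrefl p h

lemma flipG_adj (G : SimpleGraph V) (u v : V) (T : Finset V) (p q : V) :
    (flipG G u v T).Adj p q ↔
      (if ((p = u ∨ p = v) ∧ q ∈ T) ∨ ((q = u ∨ q = v) ∧ p ∈ T) then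
        (¬ G.Adj p q ∧ p ≠ q) else G.Adj p q) := Iff.rfl

lemma swap_lemma (G : SimpleGraph V) (u v : V) (huv : u ≠ v)
    (hd : deg G v ≤ deg G u) :
    ∃ G' : SimpleGraph V, (∀ w, deg G' w = deg G w) ∧
      (∀ p q : V, p ≠ u → p ≠ v → q ≠ u → q ≠ v → ((G'.Adj p q) ↔ G.Adj p q)) ∧
      (∀ w, G.Adj v w → w ≠ u → G'.Adj u w) := by
  classical
  set Nu := G.neighborFinset u with hNu
  set Nv := G.neighborFinset v with hNv
  set A : Finset V := Nu \ insert v Nv with hA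
  set B : Finset V := Nv \ insert u Nu with hB
  -- cardinality comparison
  have hcardint : (Nu ∩ insert v Nv).card = (Nv ∩ insert u Nu).card := by
    have h1 : Nu ∩ insert v Nv = (Nu ∩ Nv) ∪ (Nu ∩ {v}) := by
      rw [Finset.insert_eq, Finset.inter_union_distrib_left, Finset.union_comm]
    have h2 : Nv ∩ insert u Nu = (Nv ∩ Nu) ∪ (Nv ∩ {u}) := by
      rw [Finset.insert_eq, Finset.inter_union_distrib_left, Finset.union_comm]
    have d1 : Disjoint (Nu ∩ Nv) (Nu ∩ {v}) := by
      simp only [Finset.disjoint_left, Finset.mem_inter, Finset.mem_singleton]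
      rintro a ⟨_, ha⟩ ⟨_, rfl⟩
      exact (G.notMem_neighborFinset_self _) ha
    have d2 : Disjoint (Nv ∩ Nu) (Nv ∩ {u}) := by
      simp only [Finset.disjoint_left, Finset.mem_inter, Finset.mem_singleton]
      rintro a ⟨_, ha⟩ ⟨_, rfl⟩
      exact (G.notMem_neighborFinset_self _) ha
    have e1 : (Nu ∩ {v}).card = (Nv ∩ {u}).card := by
      by_cases hadj : G.Adj u v
      · have : Nu ∩ {v} = {v} := by
          apply Finset.inter_eq_right.mpr
          simp [hNu, SimpleGraph.mem_neighborFinset, hadj]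
        have h' : Nv ∩ {u} = {u} := by
          apply Finset.inter_eq_right.mpr
          simp [hNv, SimpleGraph.mem_neighborFinset, hadj.symm]
        rw [this, h']
        simp
      · have : Nu ∩ {v} = ∅ := by
          simp only [Finset.eq_empty_iff_forall_notMem, Finset.mem_inter, Finset.mem_singleton]
          rintro a ⟨ha, rfl⟩
          exact hadj (by simpa [hNu, SimpleGraph.mem_neighborFinset] using ha)
        have h' : Nv ∩ {u} = ∅ := by
          simp only [Finset.eq_empty_iff_forall_notMem, Finset.mem_inter, Finset.mem_singleton]
          rintro a ⟨ha, rfl⟩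
          exact hadj (G.adj_symm (by simpa [hNv, SimpleGraph.mem_neighborFinset] using ha))
        rw [this, h']
    rw [h1, h2, Finset.card_union_of_disjoint d1, Finset.card_union_of_disjoint d2,
      Finset.inter_comm Nv Nu, e1]
  have hdu : deg G u = Nu.card := deg_eq_card G u
  have hdv : deg G v = Nv.card := deg_eq_card G v
  have hBA : B.card ≤ A.card := by
    have c1 : A.card + (Nu ∩ insert v Nv).card = Nu.card :=
      Finset.card_sdiff_add_card_inter Nu (insert v Nv)
    have c2 : B.card + (Nv ∩ insert u Nu).card = Nv.card :=
      Finset.card_sdiff_add_card_inter Nv (insert u Nu)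
    rw [hdu, hdv] at hd
    omega
  -- injection from B into A
  obtain ⟨e⟩ : Nonempty ((B : Finset V) ↪ (A : Finset V)) := by
    apply Function.Embedding.nonempty_of_card_le
    simpa [Fintype.card_coe] using hBA
  set g : V → V := fun x => if h : x ∈ B then (e ⟨x, h⟩ : V) else x with hg
  have hgmem : ∀ b ∈ B, g b ∈ A := by
    intro b hb; simp only [hg, dif_pos hb]; exact (e ⟨b, hb⟩).2
  have hginj : Set.InjOn g B := by
    intro a ha b hb hab
    have ha' : a ∈ B := ha
    have hb' : b ∈ B := hb
    have hab' : (e ⟨a, ha'⟩ : V) = (e ⟨b, hb'⟩ : V) := by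
      simpa [hg, ha', hb'] using hab
    have := e.injective (Subtype.ext hab')
    exact congrArg (fun z => (z : V)) (congrArg Subtype.val this)
  set T : Finset V := B ∪ B.image g with hT
  -- basic facts
  have hAmem : ∀ a ∈ A, G.Adj u a ∧ ¬ G.Adj v a ∧ a ≠ v ∧ a ≠ u := by
    intro a ha
    simp only [hA, Finset.mem_sdiff, Finset.mem_insert, hNu, hNv,
      SimpleGraph.mem_neighborFinset] at ha
    push_neg at ha
    exact ⟨ha.1, ha.2.2, ha.2.1, fun h => G.loopless.irrefl u (h ▸ ha.1)⟩
  have hBmem : ∀ b ∈ B, G.Adj v b ∧ ¬ G.Adj u b ∧ b ≠ u ∧ b ≠ v := by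
    intro b hb
    simp only [hB, Finset.mem_sdiff, Finset.mem_insert, hNu, hNv,
      SimpleGraph.mem_neighborFinset] at hb
    push_neg at hb
    exact ⟨hb.1, hb.2.2, hb.2.1, fun h => G.loopless.irrefl v (h ▸ hb.1)⟩
  have hAB : ∀ x, x ∈ A → x ∉ B := by
    intro x hxA hxB
    exact (hAmem x hxA).2.1 ((hBmem x hxB).1)
  have huT : u ∉ T := by
    simp only [hT, Finset.mem_union, Finset.mem_image]
    rintro (h | ⟨b, hb, hgb⟩)
    · exact (hBmem u h).2.2.1 rfl
    · exact (hAmem _ (hgmem b hb)).2.2.2 hgb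
  have hvT : v ∉ T := by
    simp only [hT, Finset.mem_union, Finset.mem_image]
    rintro (h | ⟨b, hb, hgb⟩)
    · exact (hBmem v h).2.2.2 rfl
    · exact (hAmem _ (hgmem b hb)).2.2.1 hgb
  refine ⟨flipG G u v T, ?_, ?_, ?_⟩
  · -- degrees preserved
    intro w
    rw [deg_eq_card, deg_eq_card]
    by_cases hwu : w = u
    · subst hwu
      have hset : (flipG G w v T).neighborFinset w = B ∪ (Nu \ B.image g) := by
        ext q
        rw [SimpleGraph.mem_neighborFinset, flipG_adj]
        by_cases hqT : q ∈ T
        · rw [if_pos (Or.inl ⟨Or.inl rfl, hqT⟩)]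
          rcases Finset.mem_union.mp hqT with hqB | hqI
          · have F1 : ¬ G.Adj w q := (hBmem q hqB).2.1
            have F2 : w ≠ q := fun h => (hBmem q hqB).2.2.1 h.symm
            simp only [Finset.mem_union, Finset.mem_sdiff]
            tauto
          · obtain ⟨b, hb, rfl⟩ := Finset.mem_image.mp hqI
            have E1 : G.Adj w (g b) := (hAmem _ (hgmem b hb)).1
            have E2 : g b ∉ B := hAB _ (hgmem b hb)
            simp only [Finset.mem_union, Finset.mem_sdiff]
            constructor
            · rintro ⟨hna, _⟩; exact absurd E1 hna
            · rintro (h | ⟨_, h⟩)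
              · exact absurd h E2
              · exact absurd hqI h
        · rw [if_neg (by rintro (⟨_, h⟩ | ⟨_, h⟩) <;> [exact hqT h; exact huT h])]
          have F1 : q ∉ B := fun h => hqT (Finset.mem_union_left _ h)
          have F2 : q ∉ B.image g := fun h => hqT (Finset.mem_union_right _ h)
          have F3 : G.Adj w q ↔ q ∈ Nu := by
            simp [hNu, SimpleGraph.mem_neighborFinset]
          simp only [Finset.mem_union, Finset.mem_sdiff]
          tauto
      rw [hset]
      have hdisj : Disjoint B (Nu \ B.image g) := by
        simp only [Finset.disjoint_left, Finset.mem_sdiff]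
        intro b hb ⟨hbNu, _⟩
        exact (hBmem b hb).2.1 (by simpa [hNu, SimpleGraph.mem_neighborFinset] using hbNu)
      have hsub : B.image g ⊆ Nu := by
        intro a ha
        obtain ⟨b, hb, rfl⟩ := Finset.mem_image.mp ha
        simp [hNu, SimpleGraph.mem_neighborFinset, (hAmem _ (hgmem b hb)).1]
      have himgcard : (B.image g).card = B.card := Finset.card_image_of_injOn hginj
      have hBle : (B.image g).card ≤ Nu.card := Finset.card_le_card hsub
      rw [Finset.card_union_of_disjoint hdisj, Finset.card_sdiff_of_subset hsub, himgcard]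
      have : B.card ≤ Nu.card := himgcard ▸ hBle
      have hNucard : (G.neighborFinset w).card = Nu.card := by rw [hNu]
      omega
    · by_cases hwv : w = v
      · subst hwv
        have hset : (flipG G u w T).neighborFinset w = B.image g ∪ (Nv \ B) := by
          ext q
          rw [SimpleGraph.mem_neighborFinset, flipG_adj]
          by_cases hqT : q ∈ T
          · rw [if_pos (Or.inl ⟨Or.inr rfl, hqT⟩)]
            rcases Finset.mem_union.mp hqT with hqB | hqI
            · have E1 : G.Adj w q := (hBmem q hqB).1
              have E2 : q ∉ B.image g := by
                intro h
                obtain ⟨b, hb, hrfl⟩ := Finset.mem_image.mp h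
                exact hAB _ (hgmem b hb) (hrfl ▸ hqB)
              simp only [Finset.mem_union, Finset.mem_sdiff]
              constructor
              · rintro ⟨hna, _⟩; exact absurd E1 hna
              · rintro (h | ⟨_, h⟩)
                · exact absurd h E2
                · exact absurd hqB h
            · obtain ⟨b, hb, rfl⟩ := Finset.mem_image.mp hqI
              have F1 : ¬ G.Adj w (g b) := (hAmem _ (hgmem b hb)).2.1
              have F2 : w ≠ g b := fun h => (hAmem _ (hgmem b hb)).2.2.1 h.symm
              simp only [Finset.mem_union, Finset.mem_sdiff]
              tauto
          · rw [if_neg (by rintro (⟨_, h⟩ | ⟨_, h⟩) <;> [exact hqT h; exact hvT h])]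
            have F1 : q ∉ B := fun h => hqT (Finset.mem_union_left _ h)
            have F2 : q ∉ B.image g := fun h => hqT (Finset.mem_union_right _ h)
            have : G.Adj w q ↔ q ∈ Nv := by
              simp [hNv, SimpleGraph.mem_neighborFinset]
            simp only [Finset.mem_union, Finset.mem_sdiff]
            tauto
        rw [hset]
        have hdisj : Disjoint (B.image g) (Nv \ B) := by
          simp only [Finset.disjoint_left, Finset.mem_sdiff]
          intro a ha ⟨haNv, _⟩
          obtain ⟨b, hb, rfl⟩ := Finset.mem_image.mp ha
          exact (hAmem _ (hgmem b hb)).2.1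
            (by simpa [hNv, SimpleGraph.mem_neighborFinset] using haNv)
        have hsub : B ⊆ Nv := by
          intro b hb
          simp [hNv, SimpleGraph.mem_neighborFinset, (hBmem b hb).1]
        have himgcard : (B.image g).card = B.card := Finset.card_image_of_injOn hginj
        have hBle : B.card ≤ Nv.card := Finset.card_le_card hsub
        rw [Finset.card_union_of_disjoint hdisj, Finset.card_sdiff_of_subset hsub, himgcard]
        have hNvcard : (G.neighborFinset w).card = Nv.card := by rw [hNv]
        omega
      · by_cases hwT : w ∈ T
        · have hcond : ∀ q, (((w = u ∨ w = v) ∧ q ∈ T) ∨ ((q = u ∨ q = v) ∧ w ∈ T))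
              ↔ (q = u ∨ q = v) := by
            intro q
            constructor
            · rintro (⟨h, _⟩ | ⟨h, _⟩)
              · exact absurd h (by tauto)
              · exact h
            · intro h; exact Or.inr ⟨h, hwT⟩
          rcases Finset.mem_union.mp hwT with hwB | hwI
          · have F1 : ¬ G.Adj w u := fun h => (hBmem w hwB).2.1 h.symm
            have F2 : G.Adj w v := ((hBmem w hwB).1).symm
            have hset : (flipG G u v T).neighborFinset w
                = insert u ((G.neighborFinset w).erase v) := by
              ext q
              rw [SimpleGraph.mem_neighborFinset, flipG_adj]
              by_cases hq : q = u ∨ q = v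
              · rw [if_pos ((hcond q).mpr hq)]
                rcases hq with rfl | rfl
                · simp only [Finset.mem_insert, Finset.mem_erase,
                    SimpleGraph.mem_neighborFinset]
                  tauto
                · simp only [Finset.mem_insert, Finset.mem_erase,
                    SimpleGraph.mem_neighborFinset]
                  constructor
                  · rintro ⟨hna, _⟩; exact absurd F2 hna
                  · rintro (h | ⟨h, _⟩)
                    · exact absurd h (Ne.symm huv)
                    · exact absurd rfl h
              · rw [if_neg (fun h => hq ((hcond q).mp h))]
                simp only [Finset.mem_insert, Finset.mem_erase,
                  SimpleGraph.mem_neighborFinset]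
                tauto
            rw [hset]
            have h1 : u ∉ (G.neighborFinset w).erase v := by
              simp [SimpleGraph.mem_neighborFinset]
              intro _; exact F1
            have h2 : v ∈ G.neighborFinset w := by
              simp [SimpleGraph.mem_neighborFinset, F2]
            rw [Finset.card_insert_of_notMem h1, Finset.card_erase_of_mem h2]
            have := Finset.card_pos.mpr ⟨v, h2⟩
            omega
          · have hwA : w ∈ A := by
              obtain ⟨b, hb, hgb⟩ := Finset.mem_image.mp hwI
              exact hgb ▸ hgmem b hb
            have F1 : G.Adj w u := ((hAmem _ hwA).1).symm
            have F2 : ¬ G.Adj w v := fun h => (hAmem _ hwA).2.1 h.symm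
            have hset : (flipG G u v T).neighborFinset w
                = insert v ((G.neighborFinset w).erase u) := by
              ext q
              rw [SimpleGraph.mem_neighborFinset, flipG_adj]
              by_cases hq : q = u ∨ q = v
              · rw [if_pos ((hcond q).mpr hq)]
                rcases hq with rfl | rfl
                · simp only [Finset.mem_insert, Finset.mem_erase,
                    SimpleGraph.mem_neighborFinset]
                  constructor
                  · rintro ⟨hna, _⟩; exact absurd F1 hna
                  · rintro (h | ⟨h, _⟩)
                    · exact absurd h huv
                    · exact absurd rfl h
                · simp only [Finset.mem_insert, Finset.mem_erase,
                    SimpleGraph.mem_neighborFinset]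
                  tauto
              · rw [if_neg (fun h => hq ((hcond q).mp h))]
                simp only [Finset.mem_insert, Finset.mem_erase,
                  SimpleGraph.mem_neighborFinset]
                tauto
            rw [hset]
            have h1 : v ∉ (G.neighborFinset w).erase u := by
              simp [SimpleGraph.mem_neighborFinset]
              intro _; exact F2
            have h2 : u ∈ G.neighborFinset w := by
              simp [SimpleGraph.mem_neighborFinset, F1]
            rw [Finset.card_insert_of_notMem h1, Finset.card_erase_of_mem h2]
            have := Finset.card_pos.mpr ⟨u, h2⟩
            omega
        · have hset : (flipG G u v T).neighborFinset w = G.neighborFinset w := by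
            ext q
            rw [SimpleGraph.mem_neighborFinset, flipG_adj,
              if_neg (by rintro (⟨h, _⟩ | ⟨_, h⟩) <;> tauto),
              SimpleGraph.mem_neighborFinset]
          rw [hset]
  · -- edges away from u v unchanged
    intro p q hpu hpv hqu hqv
    rw [flipG_adj, if_neg]
    rintro (⟨h1, _⟩ | ⟨h1, _⟩)
    · exact h1.elim hpu hpv
    · exact h1.elim hqu hqv
  · -- u adjacent to old neighbors of v
    intro w hw hwu
    rw [flipG_adj]
    by_cases hwB : w ∈ B
    · rw [if_pos (Or.inl ⟨Or.inl rfl, Finset.mem_union_left _ hwB⟩)]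
      exact ⟨(hBmem w hwB).2.1, fun h => (hBmem w hwB).2.2.1 h.symm⟩
    · -- w ∈ Nv, w ∉ B, w ≠ u ⇒ w ∈ Nu ; also w ∉ T
      have hwNu : G.Adj u w := by
        have : w ∈ Nv := by simp [hNv, SimpleGraph.mem_neighborFinset, hw]
        have : w ∈ insert u Nu := by
          by_contra hc
          exact hwB (Finset.mem_sdiff.mpr ⟨this, hc⟩)
        rcases Finset.mem_insert.mp this with h | h
        · exact absurd h hwu
        · simpa [hNu, SimpleGraph.mem_neighborFinset] using h
      have hwT : w ∉ T := by
        simp only [hT, Finset.mem_union, Finset.mem_image]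
        rintro (h | ⟨b, hb, hgb⟩)
        · exact hwB h
        · exact (hAmem _ (hgmem b hb)).2.1 (hgb ▸ hw)
      rw [if_neg]
      · exact hwNu
      · rintro (⟨_, hqT⟩ | ⟨hq, _⟩)
        · exact hwT hqT
        · rcases hq with h | h
          · exact hwu h
          · exact G.loopless.irrefl v (h ▸ hw)


/-- Gould–Jacobson–Lehel: a potentially H-graphic sequence has a realization with a copy of H
on the |V(H)| vertices of largest degree. -/
theorem gould_jacobson_lehel {n : ℕ} {W : Type} [Fintype W] (H : SimpleGraph W)
    (π : Fin n → ℕ) (h : PotentiallyGraphic π H) :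
    ∃ G : SimpleGraph (Fin n), IsRealization G π ∧
      ∃ f : W ↪ Fin n, (∀ x y : W, H.Adj x y → G.Adj (f x) (f y)) ∧
        ∀ u : Fin n, u ∉ Set.range f → ∀ x : W, deg G u ≤ deg G (f x) := by

  classical
  obtain ⟨G0, hG0, f0, hf0⟩ := h
  set S : Set ℕ := {s | ∃ p : SimpleGraph (Fin n) × (W ↪ Fin n),
    (IsRealization p.1 π ∧ ∀ x y : W, H.Adj x y → p.1.Adj (p.2 x) (p.2 y)) ∧
    s = ∑ x : W, π (p.2 x)} with hS
  have hne : S.Nonempty := ⟨_, ⟨(G0, f0), ⟨hG0, hf0⟩, rfl⟩⟩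
  have hbdd : BddAbove S := by
    refine ⟨∑ i : Fin n, π i, ?_⟩
    rintro s ⟨⟨G, f⟩, _, rfl⟩
    calc ∑ x : W, π (f x) = ∑ i ∈ Finset.univ.map f, π i := (Finset.sum_map _ f π).symm
    _ ≤ ∑ i : Fin n, π i := Finset.sum_le_sum_of_subset (Finset.subset_univ _)
  obtain ⟨⟨G, f⟩, ⟨hreal, hcopy⟩, hsum⟩ := Nat.sSup_mem hne hbdd
  refine ⟨G, hreal, f, hcopy, ?_⟩
  intro u hu x
  by_contra hltc
  push_neg at hltc
  have huv : u ≠ f x := fun hh => hu ⟨x, hh.symm⟩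
  obtain ⟨G', hdeg, hout, hin⟩ := swap_lemma G u (f x) huv (le_of_lt hltc)
  have hreal' : IsRealization G' π := fun i => (hdeg i).trans (hreal i)
  have hinj : Function.Injective (fun y => if y = x then u else f y) := by
    intro y z hyz
    simp only at hyz
    by_cases hy : y = x
    · by_cases hz : z = x
      · rw [hy, hz]
      · rw [if_pos hy, if_neg hz] at hyz
        exact (hu ⟨z, hyz.symm⟩).elim
    · by_cases hz : z = x
      · rw [if_neg hy, if_pos hz] at hyz
        exact (hu ⟨y, hyz⟩).elim
      · rw [if_neg hy, if_neg hz] at hyz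
        exact f.injective hyz
  set f' : W ↪ Fin n := ⟨fun y => if y = x then u else f y, hinj⟩ with hf'
  have hf'x : f' x = u := by simp [hf']
  have hf'ne : ∀ y, y ≠ x → f' y = f y := by
    intro y hy; simp [hf', hy]
  have hcopy' : ∀ y z : W, H.Adj y z → G'.Adj (f' y) (f' z) := by
    intro y z hyz
    by_cases hy : y = x
    · subst hy
      have hz : z ≠ y := fun hh => H.loopless.irrefl y (hh ▸ hyz)
      rw [hf'x, hf'ne z hz]
      exact hin (f z) (hcopy y z hyz) (fun hh => hu ⟨z, hh⟩)
    · by_cases hz : z = x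
      · subst hz
        rw [hf'x, hf'ne y hy]
        exact (hin (f y) (hcopy z y hyz.symm) (fun hh => hu ⟨y, hh⟩)).symm
      · rw [hf'ne y hy, hf'ne z hz]
        refine (hout (f y) (f z) (fun hh => hu ⟨y, hh⟩)
          (fun hh => hy (f.injective hh)) (fun hh => hu ⟨z, hh⟩)
          (fun hh => hz (f.injective hh))).mpr (hcopy y z hyz)
  have hmem : (∑ y : W, π (f' y)) ∈ S := ⟨(G', f'), ⟨hreal', hcopy'⟩, rfl⟩
  have hle := le_csSup hbdd hmem
  have hsum' : ∑ y : W, π (f' y) = π u + ∑ y ∈ Finset.univ.erase x, π (f y) := by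
    rw [← Finset.add_sum_erase _ _ (Finset.mem_univ x), hf'x]
    congr 1
    exact Finset.sum_congr rfl fun y hy => by rw [hf'ne y (Finset.ne_of_mem_erase hy)]
  have hsum2 : ∑ y : W, π (f y) = π (f x) + ∑ y ∈ Finset.univ.erase x, π (f y) :=
    (Finset.add_sum_erase _ _ (Finset.mem_univ x)).symm
  have hπ : π (f x) < π u := by
    rw [← hreal (f x), ← hreal u]; exact hltc
  rw [hsum', hsum, hsum2] at hle
  omega
end Swap
end
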